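/- Let D ∈ E^k with embedding dimension d ≤ k-2, let i < j, and suppose there exists δ > 0 such that for all ε ∈ (-δ, δ), the matrix D + ε E_{ij} is an EDM of embedding dimension exactly d. Then range(K†(E_{ij})) ⊆ range(K†(D)); equivalently, the two eigenvectors e_i - e_j and (2/k)e - (e_i + e_j) of K†(E_{ij}) lie in the range of the centered Gram matrix G = K†(D). Consequently, any centered configuration matrix P of D (with PPᵀ = G) has all of its rows except rows i and j lying in a common affine translate of a linear subspace of dimension d - 2. -/

import Mathlib

open Matrix BigOperators
noncomputable section

def unitMat {n : ℕ} (i j : Fin n) : Matrix (Fin n) (Fin n) ℝ :=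
  Matrix.single i j 1 + Matrix.single j i 1

def Jmat (ι : Type*) [Fintype ι] [DecidableEq ι] : Matrix ι ι ℝ :=
  (1 : Matrix ι ι ℝ) - (Fintype.card ι : ℝ)⁻¹ • Matrix.of (fun _ _ => (1 : ℝ))

def cKdag {ι : Type*} [Fintype ι] [DecidableEq ι] (D : Matrix ι ι ℝ) : Matrix ι ι ℝ :=
  (-(1 / 2 : ℝ)) • (Jmat ι * D * Jmat ι)

def IsEDMmat {ι : Type*} [Fintype ι] [DecidableEq ι] (D : Matrix ι ι ℝ) : Prop :=
  D.IsSymm ∧ (∀ i, D i i = 0) ∧ (cKdag D).PosSemidef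


lemma symm_range_eq_orth_ker {k : ℕ} {T : EuclideanSpace ℝ (Fin k) →ₗ[ℝ] EuclideanSpace ℝ (Fin k)}
    (hT : T.IsSymmetric) : LinearMap.range T = (LinearMap.ker T)ᗮ := by
  have hle : LinearMap.range T ≤ (LinearMap.ker T)ᗮ := by
    rintro x ⟨y, rfl⟩
    intro z hz
    rw [← hT z y, LinearMap.mem_ker.mp hz, inner_zero_left]
  refine Submodule.eq_of_le_of_finrank_le hle ?_
  have h1 := LinearMap.finrank_range_add_finrank_ker T
  have h2 := Submodule.finrank_add_finrank_orthogonal (K := LinearMap.ker T)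
  omega

lemma range_subset_of_ker_subset {k : ℕ} {G B : Matrix (Fin k) (Fin k) ℝ}
    (hG : G.IsHermitian) (hB : B.IsHermitian)
    (hker : ∀ x, G *ᵥ x = 0 → B *ᵥ x = 0) :
    ∀ y, ∃ z, G *ᵥ z = B *ᵥ y := by
  intro y
  set T := Matrix.toEuclideanLin G with hTdef
  set S := Matrix.toEuclideanLin B with hSdef
  have hTs : T.IsSymmetric := Matrix.isHermitian_iff_isSymmetric.mp hG
  have hSs : S.IsSymmetric := Matrix.isHermitian_iff_isSymmetric.mp hB
  have hkerTS : LinearMap.ker T ≤ LinearMap.ker S := by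
    intro x hx
    rw [LinearMap.mem_ker] at hx ⊢
    have : G *ᵥ (WithLp.equiv 2 _ x) = 0 := by
      have := congrArg (WithLp.equiv 2 (Fin k → ℝ)) hx
      simpa [hTdef, Matrix.toEuclideanLin_apply] using this
    have h2 := hker _ this
    have : WithLp.equiv 2 (Fin k → ℝ) (S x) = 0 := by
      simpa [hSdef, Matrix.toEuclideanLin_apply] using h2
    exact (WithLp.equiv 2 (Fin k → ℝ)).injective (by simpa using this)
  have hmem : S ((WithLp.equiv 2 (Fin k → ℝ)).symm y) ∈ LinearMap.range T := by
    rw [symm_range_eq_orth_ker hTs]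
    refine Submodule.orthogonal_le hkerTS ?_
    rw [← symm_range_eq_orth_ker hSs]
    exact LinearMap.mem_range_self _ _
  obtain ⟨z, hz⟩ := hmem
  refine ⟨WithLp.equiv 2 (Fin k → ℝ) z, ?_⟩
  have := congrArg (WithLp.equiv 2 (Fin k → ℝ)) hz
  simpa [hTdef, hSdef, Matrix.toEuclideanLin_apply] using this

lemma Jmat_mulVec {k : ℕ} (x : Fin k → ℝ) :
    Jmat (Fin k) *ᵥ x = fun s => x s - (∑ t, x t) / k := by
  funext s
  simp [Jmat, Matrix.mulVec, dotProduct, Matrix.one_apply, Fintype.card_fin,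
    sub_mul, mul_sub, Finset.sum_sub_distrib, mul_ite, ite_mul, one_mul, zero_mul, mul_one, mul_zero, Finset.sum_ite_eq,
    div_eq_mul_inv, Finset.sum_mul, mul_comm]

lemma unitMat_mulVec {k : ℕ} (i j : Fin k) (x : Fin k → ℝ) :
    unitMat i j *ᵥ x = fun s => (if s = i then x j else 0) + (if s = j then x i else 0) := by
  funext s
  simp [unitMat, Matrix.mulVec, dotProduct, Matrix.single, ite_and,
    add_mul, Finset.sum_add_distrib, ite_mul, zero_mul, one_mul, Finset.sum_ite_eq, eq_comm]

lemma cKdag_unitMat_mulVec {k : ℕ} (i j : Fin k) (hij : i ≠ j) (x : Fin k → ℝ) :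
    cKdag (unitMat i j) *ᵥ x = fun s =>
      -(1/2) * (((if s = i then x j - (∑ t, x t)/k else 0) +
                 (if s = j then x i - (∑ t, x t)/k else 0)) -
        ((x j - (∑ t, x t)/k) + (x i - (∑ t, x t)/k))/k) := by
  rw [cKdag, Matrix.smul_mulVec, ← Matrix.mulVec_mulVec, ← Matrix.mulVec_mulVec,
    Jmat_mulVec, unitMat_mulVec, Jmat_mulVec]
  funext s
  simp only [Pi.smul_apply, smul_eq_mul, Finset.sum_add_distrib, Finset.sum_ite_eq,
    Finset.sum_ite_eq', Finset.mem_univ, if_true]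

lemma exists_u_preimage {k : ℕ} (i j : Fin k) (hij : i ≠ j) :
    cKdag (unitMat i j) *ᵥ (fun s => 2 * ((if s = i then (1:ℝ) else 0) - (if s = j then 1 else 0)))
      = fun s => (if s = i then (1:ℝ) else 0) - (if s = j then 1 else 0) := by
  rw [cKdag_unitMat_mulVec i j hij]
  funext s
  have hsum : (∑ t, 2 * ((if t = i then (1:ℝ) else 0) - (if t = j then 1 else 0))) = 0 := by
    simp [mul_sub, Finset.sum_sub_distrib, Finset.sum_ite_eq, hij]
  rw [hsum]
  by_cases h1 : s = i <;> by_cases h2 : s = j <;>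
    simp [h1, h2, hij, Ne.symm hij] <;> ring

lemma exists_w_preimage {k : ℕ} (i j : Fin k) (hij : i ≠ j) (hk : 3 ≤ k) :
    cKdag (unitMat i j) *ᵥ
        (fun s => (2*k/(k-2) : ℝ) * ((if s = i then (1:ℝ) else 0) + (if s = j then 1 else 0)))
      = fun s => 2/k - ((if s = i then (1:ℝ) else 0) + (if s = j then 1 else 0)) := by
  have hk0 : (k:ℝ) ≠ 0 := by positivity
  have hk2 : (k:ℝ) - 2 ≠ 0 := by
    have : (3:ℝ) ≤ k := by exact_mod_cast hk
    linarith
  rw [cKdag_unitMat_mulVec i j hij]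
  funext s
  have hsum : (∑ t, (2*k/(k-2) : ℝ) * ((if t = i then (1:ℝ) else 0) + (if t = j then 1 else 0)))
      = 2*(2*k/(k-2)) := by
    simp [mul_add, Finset.sum_add_distrib, Finset.sum_ite_eq, hij]
    ring
  rw [hsum]
  by_cases h1 : s = i <;> by_cases h2 : s = j <;>
    simp [h1, h2, hij, Ne.symm hij] <;> field_simp <;> ring

lemma Jmat_isSymm (k : ℕ) : (Jmat (Fin k)).IsSymm := by
  ext a b
  simp [Jmat, Matrix.IsSymm, Matrix.transpose_apply, Matrix.one_apply, eq_comm]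

lemma unitMat_isSymm {k : ℕ} (i j : Fin k) : (unitMat i j).IsSymm := by
  ext a b
  simp only [unitMat, Matrix.transpose_apply, Matrix.add_apply, Matrix.single,
    Matrix.of_apply]
  rw [add_comm]
  congr 1 <;> simp [and_comm]

lemma cKdag_isHermitian {k : ℕ} {M : Matrix (Fin k) (Fin k) ℝ} (hM : M.IsSymm) :
    (cKdag M).IsHermitian := by
  rw [Matrix.IsHermitian, Matrix.conjTranspose_eq_transpose_of_trivial]
  unfold cKdag
  rw [Matrix.transpose_smul, Matrix.transpose_mul, Matrix.transpose_mul,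
    (Jmat_isSymm k), hM, Matrix.mul_assoc]

lemma cKdag_add_smul {k : ℕ} (D E : Matrix (Fin k) (Fin k) ℝ) (ε : ℝ) :
    cKdag (D + ε • E) = cKdag D + ε • cKdag E := by
  unfold cKdag
  rw [Matrix.mul_add, Matrix.add_mul, smul_add, Matrix.mul_smul, Matrix.smul_mul,
    smul_comm]

/-- Necessary condition for restricted yielding: if `D + ε E_{ij}` remains an
EDM of embedding dimension exactly `d` for all small `ε`, then
`range K†(E_{ij}) ⊆ range K†(D)`, and for any centered configuration matrix
`P` with `PPᵀ = K†(D)`, all rows other than rows `i` and `j` lie in a common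
affine translate of a linear subspace of dimension `d - 2`. -/
theorem restricted_yielding_necessary (k d : ℕ) (hkd : d + 2 ≤ k)
    (D : Matrix (Fin k) (Fin k) ℝ) (hD : IsEDMmat D)
    (hrank : (cKdag D).rank = d)
    (i j : Fin k) (hij : i < j)
    (hyield : ∃ δ > (0 : ℝ), ∀ ε : ℝ, |ε| < δ →
      IsEDMmat (D + ε • unitMat i j) ∧ (cKdag (D + ε • unitMat i j)).rank = d) :
    (∀ x : Fin k → ℝ, (∃ y, cKdag (unitMat i j) *ᵥ y = x) →
      ∃ y, cKdag D *ᵥ y = x) ∧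
    (∀ P : Matrix (Fin k) (Fin d) ℝ, P * Pᵀ = cKdag D →
      ∃ (L : Submodule ℝ (Fin d → ℝ)) (v : Fin d → ℝ),
        Module.finrank ℝ L = d - 2 ∧
        ∀ s : Fin k, s ≠ i → s ≠ j → (fun t => P s t) - v ∈ L) := by
  obtain ⟨δ, hδpos, hy⟩ := hyield
  have hijne : i ≠ j := Fin.ne_of_lt hij
  have hGH : (cKdag D).IsHermitian := hD.2.2.1
  have hBH : (cKdag (unitMat i j)).IsHermitian := cKdag_isHermitian (unitMat_isSymm i j)
  have hker : ∀ x, cKdag D *ᵥ x = 0 → cKdag (unitMat i j) *ᵥ x = 0 := by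
    intro x hx
    have hε : |δ/2| < δ := by rw [abs_of_pos (by linarith)]; linarith
    have hε' : |(-(δ/2))| < δ := by rw [abs_neg]; exact hε
    have h1 : (cKdag D + (δ/2) • cKdag (unitMat i j)).PosSemidef := by
      have := (hy (δ/2) hε).1.2.2
      rwa [cKdag_add_smul] at this
    have h2 : (cKdag D + (-(δ/2)) • cKdag (unitMat i j)).PosSemidef := by
      have := (hy (-(δ/2)) hε').1.2.2
      rwa [cKdag_add_smul] at this
    have m1 : (cKdag D + (δ/2) • cKdag (unitMat i j)) *ᵥ x
        = (δ/2) • (cKdag (unitMat i j) *ᵥ x) := by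
      rw [Matrix.add_mulVec, hx, Matrix.smul_mulVec, zero_add]
    have m2 : (cKdag D + (-(δ/2)) • cKdag (unitMat i j)) *ᵥ x
        = (-(δ/2)) • (cKdag (unitMat i j) *ᵥ x) := by
      rw [Matrix.add_mulVec, hx, Matrix.smul_mulVec, zero_add]
    have q1 := h1.dotProduct_mulVec_nonneg x
    have q2 := h2.dotProduct_mulVec_nonneg x
    rw [m1] at q1
    rw [m2] at q2
    simp only [star_trivial, dotProduct_smul, smul_eq_mul] at q1 q2
    have hq : x ⬝ᵥ (cKdag (unitMat i j) *ᵥ x) = 0 := by nlinarith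
    have hzero : (cKdag D + (δ/2) • cKdag (unitMat i j)) *ᵥ x = 0 := by
      rw [← (h1.dotProduct_mulVec_zero_iff x)]
      rw [m1]
      simp only [star_trivial, dotProduct_smul, smul_eq_mul, hq, mul_zero]
    rw [m1] at hzero
    have : (δ/2 : ℝ) ≠ 0 := by linarith
    simpa [this] using hzero
  have hpart1 : ∀ x : Fin k → ℝ, (∃ y, cKdag (unitMat i j) *ᵥ y = x) →
      ∃ y, cKdag D *ᵥ y = x := by
    rintro x ⟨y, rfl⟩
    exact range_subset_of_ker_subset hGH hBH hker y
  refine ⟨hpart1, ?_⟩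
  intro P hP
  obtain ⟨z1, hz1⟩ := hpart1 _ ⟨_, exists_u_preimage i j hijne⟩
  have hPa : P *ᵥ (Pᵀ *ᵥ z1) =
      (fun s => (if s = i then (1:ℝ) else 0) - (if s = j then 1 else 0)) := by
    rw [Matrix.mulVec_mulVec, hP, hz1]
  by_cases hk3 : 3 ≤ k
  · -- main case: k ≥ 3
    obtain ⟨z2, hz2⟩ := hpart1 _ ⟨_, exists_w_preimage i j hijne hk3⟩
    have hPb : P *ᵥ (Pᵀ *ᵥ z2) =
        (fun s => 2/(k:ℝ) - ((if s = i then (1:ℝ) else 0) + (if s = j then 1 else 0))) := by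
      rw [Matrix.mulVec_mulVec, hP, hz2]
    obtain ⟨a, hPa2⟩ : ∃ a : Fin d → ℝ, P *ᵥ a =
        (fun s => (if s = i then (1:ℝ) else 0) - (if s = j then 1 else 0)) := ⟨_, hPa⟩
    obtain ⟨b, hPb2⟩ : ∃ b : Fin d → ℝ, P *ᵥ b =
        (fun s => 2/(k:ℝ) - ((if s = i then (1:ℝ) else 0) + (if s = j then 1 else 0))) :=
      ⟨_, hPb⟩
    have hk0 : (k:ℝ) ≠ 0 := by positivity
    have h2k : (2/(k:ℝ)) ≠ 0 := by positivity
    obtain ⟨r, hri, hrj⟩ : ∃ r : Fin k, r ≠ i ∧ r ≠ j := by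
      by_contra hcon
      push_neg at hcon
      have hsub : (Finset.univ : Finset (Fin k)) ⊆ {i, j} := by
        intro r _
        rcases em (r = i) with h1 | h1
        · simp [h1]
        · simp [hcon r h1]
      have hc1 := Finset.card_le_card hsub
      have hc2 : ({i, j} : Finset (Fin k)).card ≤ 2 :=
        (Finset.card_insert_le _ _).trans (by simp)
      simp [Finset.card_univ] at hc1
      omega
    have hcoef : ∀ s t : ℝ, s • a + t • b = 0 → s = 0 ∧ t = 0 := by
      intro s t hst
      have h0 : s • (P *ᵥ a) + t • (P *ᵥ b) = 0 := by
        rw [← Matrix.mulVec_smul, ← Matrix.mulVec_smul, ← Matrix.mulVec_add, hst,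
          Matrix.mulVec_zero]
      rw [hPa2, hPb2] at h0
      have ht : t = 0 := by
        have h1 := congrFun h0 r
        simp [hri, hrj] at h1
        rcases h1 with h1 | h1
        · exact h1
        · exact absurd h1 (by positivity)
      subst ht
      refine ⟨?_, rfl⟩
      have h1 := congrFun h0 i
      simpa [hijne] using h1
    have hab : LinearIndependent ℝ ![a, b] := LinearIndependent.pair_iff.mpr hcoef
    set e : EuclideanSpace ℝ (Fin d) ≃ₗ[ℝ] (Fin d → ℝ) :=
      WithLp.linearEquiv 2 ℝ (Fin d → ℝ) with hedef
    have habE : LinearIndependent ℝ (⇑e.symm ∘ ![a, b]) :=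
      hab.map' e.symm.toLinearMap (LinearEquiv.ker _)
    set K : Submodule ℝ (EuclideanSpace ℝ (Fin d)) :=
      Submodule.span ℝ (Set.range (⇑e.symm ∘ ![a, b])) with hKdef
    have hK2 : Module.finrank ℝ K = 2 := by
      rw [hKdef, finrank_span_eq_card habE]
      simp
    have hKorth := Submodule.finrank_add_finrank_orthogonal (K := K)
    have hdim : Module.finrank ℝ (EuclideanSpace ℝ (Fin d)) = d := by
      simp [finrank_euclideanSpace]
    rw [hdim, hK2] at hKorth
    -- the translate vector
    have ha0 : a ≠ 0 := by
      intro h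
      have := (hcoef 1 0 (by simp [h])).1
      norm_num at this
    set b' : Fin d → ℝ := b - ((a ⬝ᵥ b)/(a ⬝ᵥ a)) • a with hb'def
    have hb'0 : b' ≠ 0 := by
      intro h
      have heq : (-((a ⬝ᵥ b)/(a ⬝ᵥ a))) • a + (1:ℝ) • b = 0 := by
        rw [← h, hb'def]
        module
      have := (hcoef _ _ heq).2
      norm_num at this
    have hdaa : a ⬝ᵥ a ≠ 0 := fun h => ha0 (dotProduct_self_eq_zero.mp h)
    have hdbb : b' ⬝ᵥ b' ≠ 0 := fun h => hb'0 (dotProduct_self_eq_zero.mp h)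
    set v : Fin d → ℝ := ((2/(k:ℝ))/(b' ⬝ᵥ b')) • b' with hvdef
    have hab' : a ⬝ᵥ b' = 0 := by
      rw [hb'def, dotProduct_sub, dotProduct_smul, smul_eq_mul]
      field_simp
      ring
    have hav : a ⬝ᵥ v = 0 := by
      rw [hvdef, dotProduct_smul, hab', smul_eq_mul, mul_zero]
    have hbb' : b ⬝ᵥ b' = b' ⬝ᵥ b' := by
      conv_rhs => rw [hb'def]
      rw [sub_dotProduct, smul_dotProduct, hab', smul_eq_mul, mul_zero, sub_zero]
    have hbv : b ⬝ᵥ v = 2/(k:ℝ) := by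
      rw [hvdef, dotProduct_smul, smul_eq_mul, hbb']
      field_simp
    refine ⟨Kᗮ.map (e : EuclideanSpace ℝ (Fin d) →ₗ[ℝ] (Fin d → ℝ)), v, ?_, ?_⟩
    · rw [LinearEquiv.finrank_map_eq]
      omega
    · intro s hsi hsj
      have hra : a ⬝ᵥ (fun t => P s t) = 0 := by
        have h1 := congrFun hPa2 s
        simp only [Matrix.mulVec, dotProduct, hsi, hsj, if_false, sub_zero] at h1 ⊢
        rw [← h1]
        exact Finset.sum_congr rfl fun t _ => mul_comm _ _
      have hrb : b ⬝ᵥ (fun t => P s t) = 2/(k:ℝ) := by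
        have h1 := congrFun hPb2 s
        simp only [Matrix.mulVec, dotProduct, hsi, hsj, if_false, add_zero,
          sub_zero] at h1 ⊢
        rw [← h1]
        exact Finset.sum_congr rfl fun t _ => mul_comm _ _
      rw [Submodule.mem_map_equiv, Submodule.mem_orthogonal]
      intro q hq
      have hinner : ∀ (g : Fin d → ℝ),
          (inner ℝ (e.symm g) (e.symm ((fun t => P s t) - v)) : ℝ)
            = g ⬝ᵥ (fun t => P s t) - g ⬝ᵥ v := by
        intro g
        simp [hedef, PiLp.inner_apply, RCLike.inner_apply, dotProduct,
          WithLp.linearEquiv_symm_apply, mul_sub,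
          Finset.sum_sub_distrib]
        rw [← Finset.sum_sub_distrib]
        exact Finset.sum_congr rfl fun t _ => by ring
      refine Submodule.span_induction ?_ (by simp) ?_ ?_ hq
      · rintro y ⟨c, rfl⟩
        fin_cases c
        · show (inner ℝ (e.symm a) (e.symm ((fun t => P s t) - v)) : ℝ) = 0
          rw [hinner, hra, hav, sub_zero]
        · show (inner ℝ (e.symm b) (e.symm ((fun t => P s t) - v)) : ℝ) = 0
          rw [hinner, hrb, hbv, sub_self]
      · intro y z _ _ ihy ihz
        rw [inner_add_left, ihy, ihz, add_zero]
      · intro c y _ ih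
        rw [inner_smul_left, ih, mul_zero]
  · -- k = 2, d = 0 : contradiction from u
    exfalso
    have hd0 : d = 0 := by omega
    subst hd0
    have h0 := congrFun hPa i
    simp [Matrix.mulVec, dotProduct, hijne] at h0
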